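/- arXiv:1311.0989 — 2 statements merged into one kernel-verified Lean document; each statement's English description precedes it below -/
import Mathlib

section
/- Consider minimizing F(w) = ½wᵀw + (2λ₁/m²)(m·wᵀXXᵀw − wᵀXy yᵀXᵀw) − (λ₂/m)(Xy)ᵀw over w ∈ ℝ^d subject to constraints y_i·(Xᵀw)_i ≥ 1 − ξ_i that depend on w only through Xᵀw, where λ₁ ≥ 0. Then any minimizer w* lies in the column span of X, i.e., w* = Xα for some α ∈ ℝ^m (Representer theorem for LDM). -/
open Matrix

theorem stmt_1 (d m : ℕ) (hm : 0 < m) (X : Matrix (Fin d) (Fin m) ℝ)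
    (y ξ : Fin m → ℝ) (hy : ∀ i, y i = 1 ∨ y i = -1)
    (lam₁ lam₂ : ℝ) (hlam₁ : 0 ≤ lam₁)
    (F : (Fin d → ℝ) → ℝ)
    (hF : ∀ w, F w = (1/2) * (w ⬝ᵥ w)
        + (2 * lam₁ / (m : ℝ)^2) * ((m : ℝ) * (w ⬝ᵥ (X * X.transpose).mulVec w)
            - (X.mulVec y ⬝ᵥ w)^2)
        - (lam₂ / (m : ℝ)) * (X.mulVec y ⬝ᵥ w))
    (S : Set (Fin d → ℝ))
    (hS : S = {w | ∀ i, y i * (X.transpose.mulVec w) i ≥ 1 - ξ i})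
    (wstar : Fin d → ℝ) (hwstar : wstar ∈ S) (hmin : ∀ w ∈ S, F wstar ≤ F w) :
    ∃ α : Fin m → ℝ, wstar = X.mulVec α := by
  -- work in EuclideanSpace
  set K : Submodule ℝ (EuclideanSpace ℝ (Fin d)) :=
    LinearMap.range ((WithLp.linearEquiv 2 ℝ (Fin d → ℝ)).symm.toLinearMap ∘ₗ Matrix.mulVecLin X) with hK
  set u : Fin d → ℝ := (K.orthogonalProjectionOnto (WithLp.toLp 2 wstar) : EuclideanSpace ℝ (Fin d)).ofLp with hu
  obtain ⟨α, hα⟩ : ∃ α, X.mulVec α = u := by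
    obtain ⟨α, hα⟩ := (K.orthogonalProjectionOnto (WithLp.toLp 2 wstar)).2
    exact ⟨α, by rw [hu, ← hα]; rfl⟩
  set v : Fin d → ℝ := wstar - u with hv
  have hvmem : (WithLp.toLp 2 v : EuclideanSpace ℝ (Fin d)) ∈ Kᗮ := by
    exact Submodule.sub_starProjection_mem_orthogonal (K := K) (WithLp.toLp 2 wstar)
  -- Xᵀ v = 0
  have hXtv : X.transpose.mulVec v = 0 := by
    funext i
    have hcol : WithLp.toLp 2 (X.mulVec (Pi.single i 1)) ∈ K := ⟨Pi.single i 1, rfl⟩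
    have := (Submodule.mem_orthogonal K (WithLp.toLp 2 v)).1 hvmem _ hcol
    simpa [EuclideanSpace.inner_eq_star_dotProduct, Matrix.mulVec, dotProduct,
      Pi.single_apply, mul_comm] using this
  have huv : u ⬝ᵥ v = 0 := by
    have hum : (WithLp.toLp 2 u : EuclideanSpace ℝ (Fin d)) ∈ K := by
      exact ⟨α, by simp [hα]⟩
    have := (Submodule.mem_orthogonal K (WithLp.toLp 2 v)).1 hvmem _ hum
    simpa [EuclideanSpace.inner_eq_star_dotProduct, dotProduct, mul_comm] using this
  have hw : wstar = u + v := by simp [hv]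
  have hXt : X.transpose.mulVec wstar = X.transpose.mulVec u := by
    rw [hw, Matrix.mulVec_add, hXtv, add_zero]
  have huS : u ∈ S := by
    rw [hS]; intro i
    have := hwstar
    rw [hS] at this
    have h := this i
    rwa [hXt] at h
  -- rewrite F in terms of Xᵀ w
  have key : ∀ w : Fin d → ℝ, F w = (1/2) * (w ⬝ᵥ w)
      + (2 * lam₁ / (m : ℝ)^2) * ((m : ℝ) *
          ((X.transpose.mulVec w) ⬝ᵥ (X.transpose.mulVec w))
          - (y ⬝ᵥ X.transpose.mulVec w)^2)
      - (lam₂ / (m : ℝ)) * (y ⬝ᵥ X.transpose.mulVec w) := by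
    intro w
    rw [hF w]
    have h1 : w ⬝ᵥ (X * X.transpose).mulVec w
        = (X.transpose.mulVec w) ⬝ᵥ (X.transpose.mulVec w) := by
      rw [← Matrix.mulVec_mulVec, Matrix.dotProduct_mulVec, ← Matrix.mulVec_transpose]
    have h2 : X.mulVec y ⬝ᵥ w = y ⬝ᵥ X.transpose.mulVec w := by
      rw [dotProduct_comm, Matrix.dotProduct_mulVec, ← Matrix.mulVec_transpose,
        dotProduct_comm]
    rw [h1, h2]
  have hdiff : F wstar = F u + (1/2) * (v ⬝ᵥ v) := by
    rw [key wstar, key u, hXt]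
    have : wstar ⬝ᵥ wstar = u ⬝ᵥ u + v ⬝ᵥ v := by
      rw [hw]
      simp [add_dotProduct, dotProduct_add, huv, dotProduct_comm v u, huv]
    rw [this]; ring
  have hle : F wstar ≤ F u := hmin u huS
  have hvv : v ⬝ᵥ v ≤ 0 := by nlinarith [hdiff, hle]
  have hv0 : v = 0 := by
    have : v ⬝ᵥ v = 0 := le_antisymm hvv (Finset.sum_nonneg fun i _ => mul_self_nonneg (v i))
    exact (dotProduct_self_eq_zero).1 this
  refine ⟨α, ?_⟩
  rw [hw, hv0, add_zero, hα]
end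

section
/- Combining the two previous computations: if α* minimizes f(α) = ½αᵀHα + cᵀα over [0,C]^m with 0 < αᵢ* < C (so (Hα*+c)ᵢ = 0), and αⁱ minimizes f over [0,C]^m ∩ {αᵢ = 0}, and Hᵢᵢ > 0, then ((Hαⁱ + c)ᵢ)² ≤ (αᵢ*)²·Hᵢᵢ². In the LDM setting with c = (λ₂/m)He − e and (Hαⁱ + c)ᵢ related to 1 − yᵢxᵢᵀwⁱ, this yields (1 − yᵢxᵢᵀwⁱ)² ≤ (αᵢ*)²Hᵢᵢ², and if additionally yᵢxᵢᵀwⁱ < 0, then 1 ≤ αᵢ*·Hᵢᵢ. -/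
open Matrix

lemma symmdot {m : ℕ} (H : Matrix (Fin m) (Fin m) ℝ) (hsymm : Hᵀ = H) (x v : Fin m → ℝ) :
    v ⬝ᵥ H.mulVec x = x ⬝ᵥ H.mulVec v := by
  rw [Matrix.dotProduct_mulVec, ← Matrix.mulVec_transpose, hsymm, dotProduct_comm]

lemma fexp {m : ℕ} (H : Matrix (Fin m) (Fin m) ℝ) (hsymm : Hᵀ = H) (c x v : Fin m → ℝ) (t : ℝ) :
    (1/2) * ((x + t • v) ⬝ᵥ H.mulVec (x + t • v)) + c ⬝ᵥ (x + t • v)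
    = ((1/2) * (x ⬝ᵥ H.mulVec x) + c ⬝ᵥ x) + (t * ((H.mulVec x + c) ⬝ᵥ v) + t^2/2 * (v ⬝ᵥ H.mulVec v)) := by
  have hsy := symmdot H hsymm x v
  have hsy2 : H.mulVec x ⬝ᵥ v = x ⬝ᵥ H.mulVec v := by rw [dotProduct_comm]; exact hsy
  simp only [Matrix.mulVec_add, Matrix.mulVec_smul, dotProduct_add, add_dotProduct,
    smul_dotProduct, dotProduct_smul, smul_eq_mul]
  linear_combination (t/2)*hsy + (-t)*hsy2

lemma final_ineq (a g Hii : ℝ) (ha : 0 < a) (hHii : 0 < Hii) (hg0 : g ≤ 0)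
    (hsum : 0 ≤ a * g + a^2 * Hii) : g^2 ≤ a^2 * Hii^2 := by
  have h1 : -(a * Hii) ≤ g := by nlinarith
  nlinarith [mul_pos ha hHii]

lemma final_ineq2 (a g Hii s : ℝ) (ha : 0 < a) (hHii : 0 < Hii) (hgs : g = s - 1) (hs : s < 0)
    (hsum : 0 ≤ a * g + a^2 * Hii) : 1 ≤ a * Hii := by
  have h1 : -(a * Hii) ≤ g := by nlinarith
  nlinarith

lemma grad_nonneg (D Q : ℝ) (hQ : 0 ≤ Q) (h : ∀ t : ℝ, 0 < t → t ≤ 1 → 0 ≤ t*D + t^2/2*Q) : 0 ≤ D := by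
  by_contra hD
  push_neg at hD
  have hQ1 : 0 < Q + 1 := by linarith
  set t := min 1 ((-D)/(Q+1)) with ht
  have ht0 : 0 < t := lt_min one_pos (div_pos (by linarith) hQ1)
  have ht1 : t ≤ 1 := min_le_left _ _
  have ht2 : t ≤ (-D)/(Q+1) := min_le_right _ _
  have := h t ht0 ht1
  have h3 : t * (Q+1) ≤ -D := (le_div_iff₀ hQ1).mp ht2
  nlinarith [sq_nonneg t, mul_pos ht0 ht0]

theorem stmt_12 (m : ℕ) (H : Matrix (Fin m) (Fin m) ℝ) (hH : H.PosSemidef)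
    (c : Fin m → ℝ) (i : Fin m) (hHii : 0 < H i i) (C : ℝ) (hC : 0 < C)
    (f : (Fin m → ℝ) → ℝ)
    (hf : ∀ b, f b = (1/2) * (b ⬝ᵥ H.mulVec b) + c ⬝ᵥ b)
    (B : Set (Fin m → ℝ)) (hB : B = {α | ∀ j, 0 ≤ α j ∧ α j ≤ C})
    (αstar : Fin m → ℝ) (hαstarB : αstar ∈ B)
    (hαstar : ∀ α ∈ B, f αstar ≤ f α)
    (hlo : 0 < αstar i) (hhi : αstar i < C)
    (αi : Fin m → ℝ) (hαiB : αi ∈ B) (hαi0 : αi i = 0)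
    (hαimin : ∀ α ∈ B, α i = 0 → f αi ≤ f α) :
    ((H.mulVec αi + c) i)^2 ≤ (αstar i)^2 * (H i i)^2 ∧
    (∀ s : ℝ, (H.mulVec αi + c) i = s - 1 →
      (1 - s)^2 ≤ (αstar i)^2 * (H i i)^2 ∧ (s < 0 → 1 ≤ αstar i * H i i)) := by
  subst hB
  have hsymm : Hᵀ = H := by
    rw [← Matrix.conjTranspose_eq_transpose_of_trivial]; exact hH.1
  have hPSD : ∀ v : Fin m → ℝ, 0 ≤ v ⬝ᵥ H.mulVec v := fun v => by
    simpa using hH.dotProduct_mulVec_nonneg v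
  set a := αstar i with ha
  set g := (H.mulVec αi + c) i with hg
  set dstar := (H.mulVec αstar + c) i with hdstar
  set v1 : Fin m → ℝ := Pi.single i 1 with hv1
  have hv1val : ∀ j, v1 j = if j = i then 1 else 0 := by
    intro j; rw [hv1, Pi.single_apply]
  clear_value a g dstar v1
  -- gradient inequality helper
  have grad : ∀ x v : Fin m → ℝ, (∀ t : ℝ, 0 < t → t ≤ 1 → f x ≤ f (x + t • v)) →
      0 ≤ (H.mulVec x + c) ⬝ᵥ v := by
    intro x v h
    apply grad_nonneg _ _ (hPSD v)
    intro t ht0 ht1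
    have h2 := h t ht0 ht1
    rw [hf, hf, fexp H hsymm] at h2
    linarith
  -- single vector facts
  have hsingle_dot : ∀ x : Fin m → ℝ, x ⬝ᵥ v1 = x i := by
    intro x
    rw [hv1]
    simp [dotProduct, Pi.single_apply, Finset.sum_ite_eq']
  have hsingle_quad : v1 ⬝ᵥ H.mulVec v1 = H i i := by
    rw [hv1]
    simp [dotProduct, Matrix.mulVec, Pi.single_apply, Finset.sum_ite_eq']
  have hfe : ∀ (x : Fin m → ℝ) (t : ℝ),
      f (x + t • v1) = f x + (t * ((H.mulVec x + c) i) + t^2/2 * H i i) := by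
    intro x t
    rw [hf, hf, fexp H hsymm, hsingle_quad, hsingle_dot]
  -- dstar = 0
  have hgrowth : ∀ r : ℝ, (∀ t : ℝ, 0 < t → t ≤ 1 → αstar + t • (r • v1) ∈
      {α : Fin m → ℝ | ∀ j, 0 ≤ α j ∧ α j ≤ C}) → 0 ≤ dstar * r := by
    intro r hmem
    have h0 := grad αstar (r • v1) (fun t ht0 ht1 => hαstar _ (hmem t ht0 ht1))
    rw [dotProduct_smul, hsingle_dot, smul_eq_mul, ← hdstar, mul_comm] at h0
    exact h0
  have hd1 : 0 ≤ dstar * (C - a) := by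
    apply hgrowth
    intro t ht0 ht1 j
    have hj := hαstarB j
    simp only [Pi.add_apply, Pi.smul_apply, smul_eq_mul, hv1val]
    rcases eq_or_ne j i with rfl | hne
    · simp only [if_pos rfl, if_true, ← ha]
      constructor <;> nlinarith [hj.1, hj.2]
    · simpa [hne] using hj
  have hd2 : 0 ≤ dstar * (-a) := by
    apply hgrowth
    intro t ht0 ht1 j
    have hj := hαstarB j
    simp only [Pi.add_apply, Pi.smul_apply, smul_eq_mul, hv1val]
    rcases eq_or_ne j i with rfl | hne
    · simp only [if_pos rfl, if_true, ← ha]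
      constructor <;> nlinarith [hj.1, hj.2]
    · simpa [hne] using hj
  have hd0 : dstar = 0 := by nlinarith [hd1, hd2, hlo, hhi]
  -- β : αstar with coordinate i set to 0
  set β := αstar + (-a) • v1 with hβ
  clear_value β
  have hβval : ∀ j, β j = if j = i then 0 else αstar j := by
    intro j
    simp only [hβ, Pi.add_apply, Pi.smul_apply, smul_eq_mul, hv1val]
    rcases eq_or_ne j i with rfl | hne
    · simp [← ha]
    · simp [hne]
  have hβB : β ∈ {α : Fin m → ℝ | ∀ j, 0 ≤ α j ∧ α j ≤ C} := by
    intro j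
    rw [hβval]
    rcases eq_or_ne j i with rfl | hne
    · simp [le_of_lt hC]
    · simp only [if_neg hne]; exact hαstarB j
  have hβi : β i = 0 := by rw [hβval]; simp
  -- g ≤ 0
  have hDi : 0 ≤ (H.mulVec αi + c) ⬝ᵥ (β - αi) := by
    apply grad
    intro t ht0 ht1
    apply hαimin
    · intro j
      have h1 := hαiB j
      have h2 := hβB j
      simp only [Pi.add_apply, Pi.smul_apply, Pi.sub_apply, smul_eq_mul]
      constructor <;> nlinarith [h1.1, h1.2, h2.1, h2.2]
    · simp [hαi0, hβi]
  have hDs : 0 ≤ (H.mulVec αstar + c) ⬝ᵥ (αi - αstar) := by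
    apply grad
    intro t ht0 ht1
    apply hαstar
    intro j
    have h1 := hαiB j
    have h2 := hαstarB j
    simp only [Pi.add_apply, Pi.smul_apply, Pi.sub_apply, smul_eq_mul]
    constructor <;> nlinarith [h1.1, h1.2, h2.1, h2.2]
  have hkey : (H.mulVec αi + c) ⬝ᵥ (β - αi) + (H.mulVec αstar + c) ⬝ᵥ (αi - αstar)
      = -((αstar - αi) ⬝ᵥ H.mulVec (αstar - αi)) - a * g := by
    have hsy := symmdot H hsymm αstar αi
    have e1 : (H.mulVec αi) ⬝ᵥ αstar = αstar ⬝ᵥ H.mulVec αi := dotProduct_comm _ _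
    have e2 : (H.mulVec αstar) ⬝ᵥ αi = αi ⬝ᵥ H.mulVec αstar := dotProduct_comm _ _
    have e3 : (H.mulVec αi) ⬝ᵥ αi = αi ⬝ᵥ H.mulVec αi := dotProduct_comm _ _
    have e4 : (H.mulVec αstar) ⬝ᵥ αstar = αstar ⬝ᵥ H.mulVec αstar := dotProduct_comm _ _
    have e5a : (H.mulVec αi) ⬝ᵥ v1 = (H.mulVec αi) i := hsingle_dot _
    have e5b : c ⬝ᵥ v1 = c i := hsingle_dot _
    have hgi : g = (H.mulVec αi) i + c i := by rw [hg]; simp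
    simp only [hβ, add_sub_assoc]
    simp only [dotProduct_sub, dotProduct_add, sub_dotProduct,
      add_dotProduct, Matrix.mulVec_sub, Matrix.mulVec_add, dotProduct_smul,
      smul_eq_mul]
    linear_combination (-a)*e5a + (-a)*e5b + a*hgi + e1 + e2 - e3 - e4
  have hg0 : g ≤ 0 := by
    have hq := hPSD (αstar - αi)
    nlinarith [hDi, hDs, hkey, hq, hlo]
  -- value inequalities
  have hval1 : f αi ≤ f β := hαimin β hβB hβi
  have hval2 : f αstar ≤ f (αi + a • v1) := by
    apply hαstar
    intro j
    have h1 := hαiB j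
    simp only [Pi.add_apply, Pi.smul_apply, smul_eq_mul, hv1val]
    rcases eq_or_ne j i with rfl | hne
    · rw [hαi0]; simp [le_of_lt hlo, le_of_lt hhi]
    · simpa [hne] using h1
  have hfβ : f β = f αstar + ((-a) * dstar + (-a)^2/2 * H i i) := by
    have h := hfe αstar (-a)
    rw [← hβ, ← hdstar] at h
    exact h
  have hfγ : f (αi + a • v1) = f αi + (a * g + a^2/2 * H i i) := by
    have h := hfe αi a
    rw [← hg] at h
    exact h
  have hsum2 : 0 ≤ a * g + a^2 * H i i := by
    rw [hfβ, hd0] at hval1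
    rw [hfγ] at hval2
    nlinarith [hval1, hval2]
  -- conclude
  have hmain : g^2 ≤ a^2 * (H i i)^2 := final_ineq a g (H i i) hlo hHii hg0 hsum2
  refine ⟨hmain, fun s hs => ⟨?_, fun hsneg => ?_⟩⟩
  · have h1s : (1 - s)^2 = g^2 := by rw [hs]; ring
    rw [h1s]; exact hmain
  · exact final_ineq2 a g (H i i) s hlo hHii hs hsneg hsum2
end
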